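/- If a vertex v satisfies ℓ(v, N⁺(G_obs, v)) > h(v, N⁺(G_obs, v)) (strict inequality), then no threshold SyDS whose graph is obtained from G_obs by adding at most one edge incident to v can be consistent with the observation set O. -/

import Mathlib

/-- score(C,S) as an integer. -/
def scoreZ (n : ℕ) (C : Fin n → Bool) (S : Finset (Fin n)) : ℤ :=
  ((S.filter fun u => C u = true).card : ℤ)

lemma scoreZ_nonneg (n : ℕ) (C : Fin n → Bool) (S : Finset (Fin n)) :
    0 ≤ scoreZ n C S := Int.ofNat_nonneg _

lemma scoreZ_le_card (n : ℕ) (C : Fin n → Bool) (S : Finset (Fin n)) :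
    scoreZ n C S ≤ n := by
  unfold scoreZ
  have h1 : (S.filter fun u => C u = true).card ≤ (Finset.univ : Finset (Fin n)).card :=
    Finset.card_le_univ _
  simp only [Finset.card_univ, Fintype.card_fin] at h1
  exact_mod_cast h1

lemma scoreZ_mono (n : ℕ) (C : Fin n → Bool) {S T : Finset (Fin n)} (h : S ⊆ T) :
    scoreZ n C S ≤ scoreZ n C T := by
  unfold scoreZ
  exact_mod_cast Finset.card_le_card (Finset.filter_subset_filter _ h)

lemma scoreZ_insert_le (n : ℕ) (C : Fin n → Bool) (u : Fin n) (S : Finset (Fin n)) :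
    scoreZ n C (insert u S) ≤ scoreZ n C S + 1 := by
  unfold scoreZ
  rw [Finset.filter_insert]
  split
  · have := Finset.card_insert_le u (S.filter fun x => C x = true)
    exact_mod_cast this
  · linarith [Nat.le_refl (S.filter fun x => C x = true).card]

/-- If ℓ(v,N⁺(G_obs,v)) > h(v,N⁺(G_obs,v)) strictly, then no threshold SyDS whose graph
adds at most one edge incident to v to G_obs can be consistent with O at v. -/
theorem stmt9 (n : ℕ) (G : SimpleGraph (Fin n)) [DecidableRel G.Adj]
    (O : Finset ((Fin n → Bool) × (Fin n → Bool))) (v : Fin n) :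
    letI Y := insert v (G.neighborFinset v)
    letI O0 := O.filter fun p => p.2 v = false
    letI O1 := O.filter fun p => p.2 v = true
    letI l : ℤ := WithBot.unbotD (-1) ((O0.image fun p => scoreZ n p.1 Y).max)
    letI h : ℤ := WithTop.untopD (n + 1) ((O1.image fun p => scoreZ n p.1 Y).min)
    h < l →
      ∀ u : Fin n, ¬ ∃ τ : ℤ, ∀ p ∈ O,
        (p.2 v = true ↔ τ ≤ scoreZ n p.1 (insert u Y)) := by
  intro hlt u ⟨τ, hτ⟩
  set Y := insert v (G.neighborFinset v) with hY
  set O0 := O.filter fun p => p.2 v = false with hO0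
  set O1 := O.filter fun p => p.2 v = true with hO1
  set s0 := O0.image fun p => scoreZ n p.1 Y with hs0
  set s1 := O1.image fun p => scoreZ n p.1 Y with hs1
  set l : ℤ := WithBot.unbotD (-1) (s0.max) with hl
  set h : ℤ := WithTop.untopD (n + 1) (s1.min) with hh
  -- O0 nonempty
  rcases s0.eq_empty_or_nonempty with h0 | h0
  · have : l = -1 := by simp [l, h0]
    rw [this] at hlt
    rcases s1.eq_empty_or_nonempty with h1 | h1
    · have : h = ((n : ℤ) + 1) := by simp [h, h1]
      rw [this] at hlt; have : (0:ℤ) ≤ n := Int.ofNat_nonneg _; linarith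
    · obtain ⟨a, ha⟩ := Finset.min_of_nonempty h1
      have hmem : a ∈ s1 := Finset.mem_of_min ha
      obtain ⟨p, _, hp⟩ := Finset.mem_image.mp hmem
      have ha0 : 0 ≤ a := hp ▸ scoreZ_nonneg n p.1 Y
      have : h = a := by simp [h, ha]
      rw [this] at hlt; linarith
  · obtain ⟨a, ha⟩ := Finset.max_of_nonempty h0
    have hla : l = a := by simp [l, ha, WithBot.unbotD_coe]
    have hmem : a ∈ s0 := Finset.mem_of_max ha
    obtain ⟨p0, hp0O, hp0⟩ := Finset.mem_image.mp hmem
    have hp0O' := Finset.mem_filter.mp hp0O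
    -- O1 nonempty
    rcases s1.eq_empty_or_nonempty with h1 | h1
    · have hh : h = ((n : ℤ) + 1) := by simp [h, h1]
      have : a ≤ n := hp0 ▸ scoreZ_le_card n p0.1 Y
      rw [hh, hla] at hlt; linarith
    · obtain ⟨b, hb⟩ := Finset.min_of_nonempty h1
      have hhb : h = b := by simp [h, hb]
      have hmemb : b ∈ s1 := Finset.mem_of_min hb
      obtain ⟨p1, hp1O, hp1⟩ := Finset.mem_image.mp hmemb
      have hp1O' := Finset.mem_filter.mp hp1O
      -- use the threshold conditions
      have h0τ := hτ p0 hp0O'.1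
      have h1τ := hτ p1 hp1O'.1
      have hfalse : ¬ (τ ≤ scoreZ n p0.1 (insert u Y)) := by
        intro hc
        have := h0τ.mpr hc
        rw [hp0O'.2] at this; exact Bool.false_ne_true this
      have htrue : τ ≤ scoreZ n p1.1 (insert u Y) := h1τ.mp hp1O'.2
      have m0 : scoreZ n p0.1 Y ≤ scoreZ n p0.1 (insert u Y) :=
        scoreZ_mono n p0.1 (Finset.subset_insert u Y)
      have m1 : scoreZ n p1.1 (insert u Y) ≤ scoreZ n p1.1 Y + 1 :=
        scoreZ_insert_le n p1.1 u Y
      rw [hla, hhb] at hlt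
      have : scoreZ n p0.1 (insert u Y) < τ := lt_of_not_ge hfalse
      linarith [hp0, hp1]
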